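/- Let p be an odd prime, n ≥ 1 an integer, and α₁, α₂, α₃ integers coprime to p such that none of −α₁α₂, −α₁α₃, −α₂α₃ is a quadratic residue modulo p. Let a, b ∈ ℤ_p satisfy α₁a² + α₂b² = −α₃. Let T be the set of pairs (s,t) of integers with either s = 0 and 1 ≤ t ≤ pⁿ, or 1 ≤ s ≤ n, 1 ≤ t ≤ p^{n−s} and p ∤ t. For (s,t) ∈ T set D_s(t) := α₁p^{2s} + α₂t² ∈ ℤ_p. Then: (1) for every (s,t) ∈ T, D_s(t) is a unit in ℤ_p, so that Y₁(s,t) := a − 2α₂(at² − btp^s)·D_s(t)^{-1} and Y₂(s,t) := −b − 2α₁p^s(at − bp^s)·D_s(t)^{-1} lie in ℤ_p; (2) the map T → (ℤ/pⁿℤ)² sending (s,t) to (Y₁(s,t) mod pⁿ, Y₂(s,t) mod pⁿ) is injective; (3) its image is exactly the set of pairs (y₁,y₂) ∈ (ℤ/pⁿℤ)² with α₁y₁² + α₂y₂² + α₃ = 0 in ℤ/pⁿℤ; and (4) |T| = pⁿ + p^{n−1}. -/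

import Mathlib

section core
variable {R : Type*} [CommRing R] (α₁ α₂ α₃ A B : R)

/-- Relation expressing `w·τ = z·τ̄` in `R[√β]`, `β = -α₁α₂`, `z = (α₁A, B)`, `τ = (v₁,v₂)`. -/
def relV (w₁ w₂ v₁ v₂ : R) : Prop :=
  w₁ * v₁ - α₁ * α₂ * w₂ * v₂ = (α₁ * A) * v₁ + α₁ * α₂ * B * v₂ ∧
  w₁ * v₂ + w₂ * v₁ = -((α₁ * A) * v₂) + B * v₁

lemma relV_param (E' P T : R) (hE : (α₁ * P ^ 2 + α₂ * T ^ 2) * E' = 1) :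
    relV α₁ α₂ A B (α₁ * (A - 2 * α₂ * (A * T ^ 2 - B * T * P) * E'))
      (-B - 2 * α₁ * P * (A * T - B * P) * E') (α₁ * P) T := by
  constructor
  · ring
  · linear_combination (-2 * α₁ * (A * T - B * P)) * hE

lemma relV_scale {w₁ w₂ v₁ v₂ : R} (μ : R) (h : relV α₁ α₂ A B w₁ w₂ v₁ v₂) :
    relV α₁ α₂ A B w₁ w₂ (μ * v₁) (μ * v₂) :=
  ⟨by linear_combination μ * h.1, by linear_combination μ * h.2⟩

lemma relV_norm {w₁ w₂ v₁ v₂ : R} (hz : α₁ * A ^ 2 + α₂ * B ^ 2 + α₃ = 0)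
    (h : relV α₁ α₂ A B w₁ w₂ v₁ v₂) (hu : IsUnit (v₁ ^ 2 + α₁ * α₂ * v₂ ^ 2)) :
    w₁ ^ 2 + α₁ * α₂ * w₂ ^ 2 = -(α₁ * α₃) := by
  refine hu.mul_left_cancel ?_
  linear_combination
    (w₁ * v₁ - α₁ * α₂ * w₂ * v₂ + ((α₁ * A) * v₁ + α₁ * α₂ * B * v₂)) * h.1 +
    α₁ * α₂ * (w₁ * v₂ + w₂ * v₁ + (-((α₁ * A) * v₂) + B * v₁)) * h.2 +
    α₁ * (v₁ ^ 2 + α₁ * α₂ * v₂ ^ 2) * hz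

lemma relV_inj {w₁ w₂ v₁ v₂ u₁ u₂ : R} (hz : α₁ * A ^ 2 + α₂ * B ^ 2 + α₃ = 0)
    (hα₁ : IsUnit α₁) (hα₃ : IsUnit α₃) (h2 : IsUnit (2 : R))
    (h : relV α₁ α₂ A B w₁ w₂ v₁ v₂) (h' : relV α₁ α₂ A B w₁ w₂ u₁ u₂)
    (hu : IsUnit (v₁ ^ 2 + α₁ * α₂ * v₂ ^ 2)) :
    v₁ * u₂ = v₂ * u₁ := by
  have hNw := relV_norm α₁ α₂ α₃ A B hz h hu
  have c1 : -(α₁ * α₂) * w₂ * (2 * (v₂ * u₁ - v₁ * u₂)) = 0 := by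
    linear_combination u₁ * h.1 + (α₁ * α₂ * u₂) * h.2 - v₁ * h'.1 - (α₁ * α₂ * v₂) * h'.2
  have c2 : w₁ * (2 * (v₂ * u₁ - v₁ * u₂)) = 0 := by
    linear_combination (-u₂) * h.1 + u₁ * h.2 + v₂ * h'.1 - v₁ * h'.2
  have cN : (w₁ ^ 2 + α₁ * α₂ * w₂ ^ 2) * (2 * (v₂ * u₁ - v₁ * u₂)) = 0 := by
    linear_combination w₁ * c2 - w₂ * c1
  rw [hNw] at cN
  have := ((hα₁.mul hα₃).mul h2).mul_left_cancel
    (show α₁ * α₃ * 2 * (v₂ * u₁ - v₁ * u₂) = α₁ * α₃ * 2 * 0 by linear_combination -cN)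
  linear_combination -this

lemma relV_congr {w₁ w₂ v₁ t₁ t₂ : R} (h : relV α₁ α₂ A B w₁ w₂ v₁ t₁)
    (hg : v₁ * (t₁ - t₂) = 0) (hN : IsUnit (v₁ ^ 2 + α₁ * α₂ * t₁ ^ 2)) :
    relV α₁ α₂ A B w₁ w₂ v₁ t₂ := by
  have E₁ : (w₁ * v₁ - α₁ * α₂ * w₂ * t₂ - ((α₁ * A) * v₁ + α₁ * α₂ * B * t₂)) * v₁
      - α₁ * α₂ * ((w₁ * t₂ + w₂ * v₁ - (-((α₁ * A) * t₂) + B * v₁))) * t₁ = 0 := by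
    linear_combination v₁ * h.1 + (-(α₁ * α₂) * t₂) * h.2 + (2 * α₁ * α₂ * B) * hg
  have E₂ : (w₁ * v₁ - α₁ * α₂ * w₂ * t₂ - ((α₁ * A) * v₁ + α₁ * α₂ * B * t₂)) * t₁
      + (w₁ * t₂ + w₂ * v₁ - (-((α₁ * A) * t₂) + B * v₁)) * v₁ = 0 := by
    linear_combination t₂ * h.1 + v₁ * h.2 - 2 * α₁ * A * hg
  constructor
  · have := hN.mul_left_cancel (show (v₁ ^ 2 + α₁ * α₂ * t₁ ^ 2) *
        (w₁ * v₁ - α₁ * α₂ * w₂ * t₂ - ((α₁ * A) * v₁ + α₁ * α₂ * B * t₂))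
        = (v₁ ^ 2 + α₁ * α₂ * t₁ ^ 2) * 0 by linear_combination v₁ * E₁ + α₁ * α₂ * t₁ * E₂)
    linear_combination this
  · have := hN.mul_left_cancel (show (v₁ ^ 2 + α₁ * α₂ * t₁ ^ 2) *
        (w₁ * t₂ + w₂ * v₁ - (-((α₁ * A) * t₂) + B * v₁))
        = (v₁ ^ 2 + α₁ * α₂ * t₁ ^ 2) * 0 by linear_combination v₁ * E₂ - t₁ * E₁)
    linear_combination this

lemma relV_extract {y₁ y₂ Y₁ Y₂ P T : R} (hα₁ : IsUnit α₁)
    (h : relV α₁ α₂ A B (α₁ * y₁) y₂ (α₁ * P) T)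
    (hpar : relV α₁ α₂ A B (α₁ * Y₁) Y₂ (α₁ * P) T)
    (hN : IsUnit ((α₁ * P) ^ 2 + α₁ * α₂ * T ^ 2)) :
    y₁ = Y₁ ∧ y₂ = Y₂ := by
  have F₁ : (α₁ * y₁ - α₁ * Y₁) * (α₁ * P) - α₁ * α₂ * (y₂ - Y₂) * T = 0 := by
    linear_combination h.1 - hpar.1
  have F₂ : (α₁ * y₁ - α₁ * Y₁) * T + (y₂ - Y₂) * (α₁ * P) = 0 := by
    linear_combination h.2 - hpar.2
  have d₁ : α₁ * y₁ - α₁ * Y₁ = 0 := by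
    refine hN.mul_left_cancel ?_
    linear_combination (α₁ * P) * F₁ + α₁ * α₂ * T * F₂
  have d₂ : y₂ - Y₂ = 0 := by
    refine hN.mul_left_cancel ?_
    linear_combination (α₁ * P) * F₂ - T * F₁
  constructor
  · have := hα₁.mul_left_cancel (show α₁ * y₁ = α₁ * Y₁ by linear_combination d₁)
    exact this
  · linear_combination d₂

lemma relV_sols {y₁ y₂ v₁ v₂ : R} (hz : α₁ * A ^ 2 + α₂ * B ^ 2 + α₃ = 0)
    (hα₁ : IsUnit α₁) (h : relV α₁ α₂ A B (α₁ * y₁) y₂ v₁ v₂)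
    (hu : IsUnit (v₁ ^ 2 + α₁ * α₂ * v₂ ^ 2)) :
    α₁ * y₁ ^ 2 + α₂ * y₂ ^ 2 + α₃ = 0 := by
  have hNw := relV_norm α₁ α₂ α₃ A B hz h hu
  have := hα₁.mul_left_cancel (show α₁ * (α₁ * y₁ ^ 2 + α₂ * y₂ ^ 2 + α₃) = α₁ * 0 by
    linear_combination hNw)
  linear_combination this

lemma relV_start_plus {y₁ y₂ : R} (hz : α₁ * A ^ 2 + α₂ * B ^ 2 + α₃ = 0)
    (hy : α₁ * y₁ ^ 2 + α₂ * y₂ ^ 2 + α₃ = 0) :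
    relV α₁ α₂ A B (α₁ * y₁) y₂
      (-(α₁ * α₃) + ((α₁ * A) * (α₁ * y₁) + α₁ * α₂ * B * y₂))
      (-((α₁ * A) * y₂ - B * (α₁ * y₁))) := by
  constructor
  · linear_combination (-(α₁ * (α₁ * y₁))) * hz + (α₁ * (α₁ * A)) * hy
  · linear_combination (-(α₁ * y₂)) * hz + (α₁ * B) * hy

lemma relV_start_minus {y₁ y₂ : R} (hz : α₁ * A ^ 2 + α₂ * B ^ 2 + α₃ = 0)
    (hy : α₁ * y₁ ^ 2 + α₂ * y₂ ^ 2 + α₃ = 0) :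
    relV α₁ α₂ A B (α₁ * y₁) y₂
      (α₁ * α₂ * ((α₁ * A) * y₂ - B * (α₁ * y₁)))
      (((α₁ * A) * (α₁ * y₁) + α₁ * α₂ * B * y₂) - -(α₁ * α₃)) := by
  constructor
  · linear_combination (-(α₁ ^ 2 * α₂ * y₂)) * hz + (-(α₁ ^ 2 * α₂ * B)) * hy
  · linear_combination (α₁ * (α₁ * y₁)) * hz + (α₁ * (α₁ * A)) * hy

end core


variable {p : ℕ} [hp : Fact p.Prime]

lemma padic_int_isUnit_iff (k : ℤ) : IsUnit (k : ℤ_[p]) ↔ ¬ (p : ℤ) ∣ k := by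
  rw [PadicInt.isUnit_iff, ← PadicInt.norm_int_lt_one_iff_dvd]
  have h1 : ‖(k : ℤ_[p])‖ ≤ 1 := PadicInt.norm_le_one _
  constructor
  · intro h h'; rw [h] at h'; exact lt_irrefl _ h'
  · intro h; exact le_antisymm h1 (not_lt.mp h)

lemma padic_toZMod_eq_zero {x : ℤ_[p]} (hx : ¬ IsUnit x) : PadicInt.toZMod x = 0 := by
  have : x ∈ RingHom.ker (PadicInt.toZMod (p := p)) := by
    rw [PadicInt.ker_toZMod]
    exact (IsLocalRing.mem_maximalIdeal x).mpr hx
  exact this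

section zmodpn
variable {n : ℕ}

lemma zmodpn_unit_iff (hn : 1 ≤ n) (x : ZMod (p ^ n)) :
    IsUnit x ↔ (ZMod.castHom (dvd_pow_self p (by omega : n ≠ 0)) (ZMod p) x) ≠ 0 := by
  have hne : NeZero (p ^ n) := ⟨pow_ne_zero n hp.1.ne_zero⟩
  constructor
  · intro h h0
    have := h.map (ZMod.castHom (dvd_pow_self p (by omega : n ≠ 0)) (ZMod p))
    rw [h0] at this
    exact this.ne_zero rfl
  · intro h
    have hval : ¬ p ∣ x.val := by
      intro hd
      apply h
      rw [ZMod.castHom_apply, ← ZMod.natCast_val, ZMod.natCast_eq_zero_iff]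
      exact hd
    have : IsUnit ((x.val : ℕ) : ZMod (p ^ n)) := by
      rw [ZMod.isUnit_iff_coprime]
      exact Nat.Coprime.pow_right _ ((Nat.Prime.coprime_iff_not_dvd hp.1).mpr hval).symm
    rwa [ZMod.natCast_zmod_val] at this

omit hp in
lemma zmodpn_pow_n_eq_zero : ((p : ZMod (p ^ n))) ^ n = 0 := by
  rw [← Nat.cast_pow, ZMod.natCast_self]

lemma zmodpn_decomp (hn : 1 ≤ n) (x : ZMod (p ^ n)) :
    ∃ (s : ℕ) (u : ZMod (p ^ n)), s ≤ n ∧ IsUnit u ∧ x = (p : ZMod (p ^ n)) ^ s * u ∧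
      (¬ IsUnit x → 1 ≤ s) := by
  have hne : NeZero (p ^ n) := ⟨pow_ne_zero n hp.1.ne_zero⟩
  by_cases hx : x = 0
  · refine ⟨n, 1, le_rfl, isUnit_one, ?_, fun _ => hn⟩
    rw [hx, zmodpn_pow_n_eq_zero, zero_mul]
  · have hv : x.val ≠ 0 := fun h => hx ((ZMod.val_eq_zero x).mp h)
    set s := x.val.factorization p with hs
    have hdvd : p ^ s ∣ x.val := Nat.ordProj_dvd _ _
    have hsn : s ≤ n := by
      have h1 : p ^ s ≤ x.val := Nat.le_of_dvd (Nat.pos_of_ne_zero hv) hdvd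
      have h2 : x.val < p ^ n := ZMod.val_lt x
      exact le_of_lt (Nat.pow_lt_pow_iff_right hp.1.one_lt |>.mp (lt_of_le_of_lt h1 h2))
    have hcop : ¬ p ∣ (x.val / p ^ s) := Nat.not_dvd_ordCompl hp.1 hv
    refine ⟨s, ((x.val / p ^ s : ℕ) : ZMod (p ^ n)), hsn, ?_, ?_, ?_⟩
    · rw [ZMod.isUnit_iff_coprime]
      exact Nat.Coprime.pow_right _ ((Nat.Prime.coprime_iff_not_dvd hp.1).mpr hcop).symm
    · conv_lhs => rw [← ZMod.natCast_zmod_val x]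
      rw [← Nat.cast_pow, ← Nat.cast_mul, Nat.ordProj_mul_ordCompl_eq_self]
    · intro hnu
      by_contra hs1
      have hs0 : s = 0 := by omega
      apply hnu
      have hnd : ¬ p ∣ x.val := by
        intro hd
        have h1 : p ^ 1 ∣ x.val := by simpa using hd
        have := (Nat.Prime.pow_dvd_iff_le_factorization hp.1 hv).mp h1
        omega
      have : IsUnit ((x.val : ℕ) : ZMod (p ^ n)) := by
        rw [ZMod.isUnit_iff_coprime]
        exact Nat.Coprime.pow_right _ ((Nat.Prime.coprime_iff_not_dvd hp.1).mpr hnd).symm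
      rwa [ZMod.natCast_zmod_val] at this

end zmodpn

lemma int_rep (m : ℕ) (v : ℤ) :
    ∃ t : ℤ, 1 ≤ t ∧ t ≤ (p : ℤ) ^ m ∧ ((p : ℤ) ^ m) ∣ (t - v) ∧
      (¬ (p : ℤ) ∣ v → ¬ (p : ℤ) ∣ t) := by
  have hpm : (0 : ℤ) < (p : ℤ) ^ m := by
    have := hp.1.pos
    positivity
  set M := (p : ℤ) ^ m with hM
  set r := v % M with hr
  have hr0 : 0 ≤ r := Int.emod_nonneg v (ne_of_gt hpm)
  have hrM : r < M := Int.emod_lt_of_pos v hpm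
  have hdvd : M ∣ r - v := by
    rw [hr, Int.emod_def]
    exact ⟨-(v / M), by ring⟩
  by_cases h0 : r = 0
  · refine ⟨M, by omega, le_rfl, ?_, ?_⟩
    · have : M ∣ v := by
        have := hdvd; rw [h0] at this
        simpa using this.neg_right
      exact dvd_sub dvd_rfl this
    · intro hv hd
      rcases Nat.eq_zero_or_pos m with hm | hm
      · have hM1 : M = 1 := by rw [hM, hm, pow_zero]
        rw [hM1] at hd
        have h1 := Int.le_of_dvd one_pos hd
        have h2 := hp.1.two_le
        have : ((2:ℕ) : ℤ) ≤ (p : ℤ) := by exact_mod_cast h2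
        omega
      · apply hv
        have hpM : (p : ℤ) ∣ M := by
          rw [hM]
          exact dvd_pow_self _ (by omega)
        have : M ∣ v := by
          have := hdvd; rw [h0] at this
          simpa using this.neg_right
        exact hpM.trans this
  · refine ⟨r, by omega, by omega, hdvd, ?_⟩
    intro hv hpr
    rcases Nat.eq_zero_or_pos m with hm | hm
    · rw [hM, hm] at hrM
      simp at hrM
      omega
    · apply hv
      have hpM : (p : ℤ) ∣ M := by
        rw [hM]; exact dvd_pow_self _ (by omega)
      have h2 : (p : ℤ) ∣ r - v := hpM.trans hdvd
      have := dvd_sub hpr h2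
      simpa using this


variable {p : ℕ} [hp : Fact p.Prime] {n : ℕ}

lemma zmodpn_int_unit (hn : 1 ≤ n) (c : ℤ) (hc : ¬ (p : ℤ) ∣ c) :
    IsUnit ((c : ZMod (p ^ n))) := by
  rw [zmodpn_unit_iff hn]
  rw [map_intCast]
  intro h0
  exact hc ((ZMod.intCast_zmod_eq_zero_iff_dvd c p).mp h0)

lemma zmodpn_unit_not_dvd_val (hn : 1 ≤ n) {x : ZMod (p ^ n)} (hx : IsUnit x) :
    ¬ p ∣ x.val := by
  intro hd
  have hne : NeZero (p ^ n) := ⟨pow_ne_zero n hp.1.ne_zero⟩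
  rw [zmodpn_unit_iff hn] at hx
  apply hx
  rw [ZMod.castHom_apply, ← ZMod.natCast_val, ZMod.natCast_eq_zero_iff]
  exact hd


lemma no_sol {p : ℕ} [hp : Fact p.Prime] (c d : ℤ) (hc : ¬ (p : ℤ) ∣ c) (hd : ¬ (p : ℤ) ∣ d)
    (hq : legendreSym p (-(c * d)) ≠ 1) (x : ZMod p)
    (h : (c : ZMod p) + (d : ZMod p) * x ^ 2 = 0) : False := by
  have hc0 : ((c : ℤ) : ZMod p) ≠ 0 := fun h0 => hc ((ZMod.intCast_zmod_eq_zero_iff_dvd c p).mp h0)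
  have hd0 : ((d : ℤ) : ZMod p) ≠ 0 := fun h0 => hd ((ZMod.intCast_zmod_eq_zero_iff_dvd d p).mp h0)
  have hsq : ((-(c * d) : ℤ) : ZMod p) = ((d : ZMod p) * x) * ((d : ZMod p) * x) := by
    push_cast
    linear_combination (-(d : ZMod p)) * h
  have hne : ((-(c * d) : ℤ) : ZMod p) ≠ 0 := by
    push_cast
    intro h0
    rcases mul_eq_zero.mp (neg_eq_zero.mp h0) with h' | h'
    · exact hc0 h'
    · exact hd0 h'
  exact hq ((legendreSym.eq_one_iff p hne).mpr ⟨(d : ZMod p) * x, hsq⟩)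

lemma denom_not_dvd {p : ℕ} [hp : Fact p.Prime] (α₁ α₂ : ℤ)
    (h1 : ¬ (p : ℤ) ∣ α₁) (h2 : ¬ (p : ℤ) ∣ α₂)
    (hq12 : legendreSym p (-(α₁ * α₂)) ≠ 1) (s : ℕ) (t : ℤ)
    (hst : s = 0 ∨ (1 ≤ s ∧ ¬ (p : ℤ) ∣ t)) :
    ¬ (p : ℤ) ∣ (α₁ * (p : ℤ) ^ (2 * s) + α₂ * t ^ 2) := by
  intro hdvd
  rcases hst with rfl | ⟨hs, ht⟩
  · have : ((α₁ * (p : ℤ) ^ (2 * 0) + α₂ * t ^ 2 : ℤ) : ZMod p) = 0 :=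
      (ZMod.intCast_zmod_eq_zero_iff_dvd _ p).mpr hdvd
    push_cast at this
    rw [pow_zero, mul_one] at this
    exact no_sol α₁ α₂ h1 h2 hq12 (t : ZMod p) this
  · have hpp : Prime ((p : ℤ)) := Nat.prime_iff_prime_int.mp hp.1
    have hps : (p : ℤ) ∣ (p : ℤ) ^ (2 * s) := dvd_pow_self _ (by omega)
    have : (p : ℤ) ∣ α₂ * t ^ 2 := by
      have := dvd_sub hdvd (Dvd.dvd.mul_left hps α₁)
      simpa using this
    rcases hpp.dvd_mul.mp this with h' | h'
    · exact h2 h'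
    · exact ht (hpp.dvd_of_dvd_pow h')



-- arithmetic lemma for injectivity on T
lemma T_inj_arith {p : ℕ} (hpp : p.Prime) {n : ℕ} (hn : 1 ≤ n) {s s' : ℕ} {t t' : ℤ}
    (hs : (s = 0 ∧ 1 ≤ t ∧ t ≤ (p : ℤ) ^ n) ∨
      (1 ≤ s ∧ s ≤ n ∧ 1 ≤ t ∧ t ≤ (p : ℤ) ^ (n - s) ∧ ¬ (p : ℤ) ∣ t))
    (hs' : (s' = 0 ∧ 1 ≤ t' ∧ t' ≤ (p : ℤ) ^ n) ∨
      (1 ≤ s' ∧ s' ≤ n ∧ 1 ≤ t' ∧ t' ≤ (p : ℤ) ^ (n - s') ∧ ¬ (p : ℤ) ∣ t'))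
    (hdvd : (p : ℤ) ^ n ∣ (p : ℤ) ^ s * t' - (p : ℤ) ^ s' * t) :
    s = s' ∧ t = t' := by
  have hp1 : (1 : ℤ) < (p : ℤ) := by exact_mod_cast hpp.one_lt
  have hp0 : (0 : ℤ) < (p : ℤ) := by linarith
  have hpn : (p : ℤ) ∣ (p : ℤ) ^ n := dvd_pow_self _ (by omega)
  rcases hs with ⟨rfl, ht1, ht2⟩ | ⟨hs1, hs2, ht1, ht2, htnd⟩ <;>
    rcases hs' with ⟨rfl, ht1', ht2'⟩ | ⟨hs1', hs2', ht1', ht2', htnd'⟩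
  · -- both s = 0
    refine ⟨rfl, ?_⟩
    simp only [pow_zero, one_mul] at hdvd
    have h0 : t' - t = 0 := by
      refine Int.eq_zero_of_abs_lt_dvd hdvd ?_
      rw [abs_lt]
      constructor <;> linarith
    linarith
  · -- s = 0, s' ≥ 1 : contradiction
    exfalso
    simp only [pow_zero, one_mul] at hdvd
    have h1 : (p : ℤ) ∣ t' - (p : ℤ) ^ s' * t := hpn.trans hdvd
    have h2 : (p : ℤ) ∣ (p : ℤ) ^ s' * t := Dvd.dvd.mul_right (dvd_pow_self _ (by omega)) t
    have : (p : ℤ) ∣ t' := by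
      have := dvd_add h1 h2
      simpa using this
    exact htnd' this
  · -- s ≥ 1, s' = 0
    exfalso
    simp only [pow_zero, one_mul] at hdvd
    have h1 : (p : ℤ) ∣ (p : ℤ) ^ s * t' - t := hpn.trans hdvd
    have h2 : (p : ℤ) ∣ (p : ℤ) ^ s * t' := Dvd.dvd.mul_right (dvd_pow_self _ (by omega)) t'
    have : (p : ℤ) ∣ t := by
      have := dvd_sub h2 h1
      simpa using this
    exact htnd this
  · -- both ≥ 1
    rcases le_total s s' with hle | hle
    · have hfac : (p : ℤ) ^ s * ((p : ℤ) ^ (n - s)) = (p : ℤ) ^ n := by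
        rw [← pow_add]; congr 1; omega
      have hfac2 : (p : ℤ) ^ s * ((p : ℤ) ^ (s' - s) * t) = (p : ℤ) ^ s' * t := by
        rw [← mul_assoc, ← pow_add]; congr 2; omega
      have hd2 : (p : ℤ) ^ (n - s) ∣ t' - (p : ℤ) ^ (s' - s) * t := by
        have : (p : ℤ) ^ s * ((p : ℤ) ^ (n - s)) ∣ (p : ℤ) ^ s * (t' - (p : ℤ) ^ (s' - s) * t) := by
          rw [hfac, mul_sub, hfac2]; exact hdvd
        exact (mul_dvd_mul_iff_left (pow_ne_zero s (ne_of_gt hp0))).mp this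
      by_cases hss : s = s'
      · subst hss
        refine ⟨rfl, ?_⟩
        simp only [Nat.sub_self, pow_zero, one_mul] at hd2
        have hb : t' - t = 0 := by
          refine Int.eq_zero_of_abs_lt_dvd hd2 ?_
          rw [abs_lt]
          constructor <;> [linarith; linarith]
        linarith
      · exfalso
        have hlt : s < s' := lt_of_le_of_ne hle hss
        have h1 : (p : ℤ) ∣ t' - (p : ℤ) ^ (s' - s) * t :=
          (dvd_pow_self (p : ℤ) (by omega : n - s ≠ 0)).trans hd2
        have h2 : (p : ℤ) ∣ (p : ℤ) ^ (s' - s) * t :=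
          Dvd.dvd.mul_right (dvd_pow_self _ (by omega)) t
        have : (p : ℤ) ∣ t' := by
          have := dvd_add h1 h2
          simpa using this
        exact htnd' this
    · -- symmetric : s' ≤ s
      have hdvd' : (p : ℤ) ^ n ∣ (p : ℤ) ^ s' * t - (p : ℤ) ^ s * t' := by
        have := hdvd.neg_right
        simpa using this
      have hfac : (p : ℤ) ^ s' * ((p : ℤ) ^ (n - s')) = (p : ℤ) ^ n := by
        rw [← pow_add]; congr 1; omega
      have hfac2 : (p : ℤ) ^ s' * ((p : ℤ) ^ (s - s') * t') = (p : ℤ) ^ s * t' := by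
        rw [← mul_assoc, ← pow_add]; congr 2; omega
      have hd2 : (p : ℤ) ^ (n - s') ∣ t - (p : ℤ) ^ (s - s') * t' := by
        have : (p : ℤ) ^ s' * ((p : ℤ) ^ (n - s')) ∣ (p : ℤ) ^ s' * (t - (p : ℤ) ^ (s - s') * t') := by
          rw [hfac, mul_sub, hfac2]; exact hdvd'
        exact (mul_dvd_mul_iff_left (pow_ne_zero s' (ne_of_gt hp0))).mp this
      by_cases hss : s = s'
      · subst hss
        refine ⟨rfl, ?_⟩
        simp only [Nat.sub_self, pow_zero, one_mul] at hd2
        have hb : t - t' = 0 := by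
          refine Int.eq_zero_of_abs_lt_dvd hd2 ?_
          rw [abs_lt]
          constructor <;> [linarith; linarith]
        linarith
      · exfalso
        have hlt : s' < s := lt_of_le_of_ne hle (Ne.symm hss)
        have h1 : (p : ℤ) ∣ t - (p : ℤ) ^ (s - s') * t' :=
          (dvd_pow_self (p : ℤ) (by omega : n - s' ≠ 0)).trans hd2
        have h2 : (p : ℤ) ∣ (p : ℤ) ^ (s - s') * t' :=
          Dvd.dvd.mul_right (dvd_pow_self _ (by omega)) t'
        have : (p : ℤ) ∣ t := by
          have := dvd_add h1 h2
          simpa using this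
        exact htnd this


section counting
variable {p : ℕ}

lemma card_filter_not_dvd (hpp : p.Prime) (m : ℕ) :
    ((Finset.Icc (1 : ℤ) ((p : ℤ) ^ m)).filter (fun t => ¬ (p : ℤ) ∣ t)).card
      = p ^ m - p ^ m / p := by
  have hp0 : (0 : ℤ) < (p : ℤ) := by exact_mod_cast hpp.pos
  have hIcc : (Finset.Icc (1 : ℤ) ((p : ℤ) ^ m)).card = p ^ m := by
    rw [Int.card_Icc]
    have : ((p : ℤ) ^ m + 1 - 1) = ((p ^ m : ℕ) : ℤ) := by push_cast; ring
    rw [this, Int.toNat_natCast]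
  have himg : (Finset.Icc (1 : ℤ) ((p : ℤ) ^ m)).filter (fun t => (p : ℤ) ∣ t)
      = (Finset.Icc (1 : ℤ) ((p : ℤ) ^ m / p)).image (fun k => (p : ℤ) * k) := by
    ext t
    simp only [Finset.mem_filter, Finset.mem_Icc, Finset.mem_image]
    constructor
    · rintro ⟨⟨h1, h2⟩, k, rfl⟩
      refine ⟨k, ⟨?_, ?_⟩, rfl⟩
      · nlinarith
      · rw [Int.le_ediv_iff_mul_le hp0]; linarith
    · rintro ⟨k, ⟨hk1, hk2⟩, rfl⟩
      rw [Int.le_ediv_iff_mul_le hp0] at hk2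
      exact ⟨⟨by nlinarith, by linarith⟩, ⟨k, rfl⟩⟩
  have hdvdcard : ((Finset.Icc (1 : ℤ) ((p : ℤ) ^ m)).filter (fun t => (p : ℤ) ∣ t)).card
      = p ^ m / p := by
    rw [himg, Finset.card_image_of_injective _ (mul_right_injective₀ (ne_of_gt hp0)),
      Int.card_Icc]
    have hcast : (p : ℤ) ^ m / (p : ℤ) = ((p ^ m / p : ℕ) : ℤ) := by
      rw [← Nat.cast_pow, ← Int.natCast_ediv]
    rw [hcast]
    rw [add_sub_cancel_right, Int.toNat_natCast]
  have := Finset.card_filter_add_card_filter_not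
    (s := Finset.Icc (1 : ℤ) ((p : ℤ) ^ m)) (p := fun t => (p : ℤ) ∣ t)
  omega

lemma sum_pow_sub (hpp : p.Prime) (n : ℕ) (hn : 1 ≤ n) :
    ∑ k ∈ Finset.range n, (p ^ k - p ^ k / p) = p ^ (n - 1) := by
  induction n with
  | zero => omega
  | succ m ih =>
    rcases Nat.eq_zero_or_pos m with rfl | hm
    · simp [Nat.div_eq_of_lt hpp.one_lt]
    · rw [Finset.sum_range_succ, ih hm]
      have h1 : p ^ m / p = p ^ (m - 1) := by
        conv_lhs => rw [show m = (m - 1) + 1 by omega, pow_succ]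
        rw [Nat.mul_div_cancel _ hpp.pos]
      have h2 : p ^ (m - 1) ≤ p ^ m := Nat.pow_le_pow_right hpp.pos (by omega)
      have h3 : p ^ (m-1) < p ^ m := Nat.pow_lt_pow_right hpp.one_lt (by omega)
      rw [h1]
      simp only [Nat.add_sub_cancel]
      omega

lemma count_T (hpp : p.Prime) (n : ℕ) (hn : 1 ≤ n) (T : Set (ℕ × ℤ))
    (hT : T = {st : ℕ × ℤ |
        (st.1 = 0 ∧ 1 ≤ st.2 ∧ st.2 ≤ (p : ℤ) ^ n) ∨
        (1 ≤ st.1 ∧ st.1 ≤ n ∧ 1 ≤ st.2 ∧ st.2 ≤ (p : ℤ) ^ (n - st.1) ∧ ¬ (p : ℤ) ∣ st.2)}) :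
    Nat.card T = p ^ n + p ^ (n - 1) := by
  classical
  set F : Finset (ℕ × ℤ) :=
    (({0} : Finset ℕ) ×ˢ Finset.Icc (1 : ℤ) ((p : ℤ) ^ n)) ∪
      ((Finset.Icc 1 n).biUnion fun s =>
        ({s} : Finset ℕ) ×ˢ ((Finset.Icc (1 : ℤ) ((p : ℤ) ^ (n - s))).filter
          (fun t => ¬ (p : ℤ) ∣ t))) with hF
  have hTF : T = ↑F := by
    ext ⟨s, t⟩
    simp only [hT, hF, Set.mem_setOf_eq, Finset.coe_union, Set.mem_union, Finset.mem_coe,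
      Finset.mem_product, Finset.mem_singleton, Finset.mem_Icc, Finset.mem_biUnion,
      Finset.mem_filter]
    constructor
    · rintro (⟨rfl, h1, h2⟩ | ⟨h1, h2, h3, h4, h5⟩)
      · exact Or.inl ⟨rfl, h1, h2⟩
      · exact Or.inr ⟨s, ⟨h1, h2⟩, rfl, ⟨h3, h4⟩, h5⟩
    · rintro (⟨rfl, h1, h2⟩ | ⟨s', ⟨h1, h2⟩, rfl, ⟨h3, h4⟩, h5⟩)
      · exact Or.inl ⟨rfl, h1, h2⟩
      · exact Or.inr ⟨h1, h2, h3, h4, h5⟩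
  have hcard : Nat.card T = F.card := by
    rw [hTF, Nat.card_coe_set_eq, Set.ncard_coe_finset]
  rw [hcard]
  have hdisj : Disjoint (({0} : Finset ℕ) ×ˢ Finset.Icc (1 : ℤ) ((p : ℤ) ^ n))
      ((Finset.Icc 1 n).biUnion fun s =>
        ({s} : Finset ℕ) ×ˢ ((Finset.Icc (1 : ℤ) ((p : ℤ) ^ (n - s))).filter
          (fun t => ¬ (p : ℤ) ∣ t))) := by
    rw [Finset.disjoint_left]
    rintro ⟨s, t⟩ h1 h2
    simp only [Finset.mem_product, Finset.mem_singleton, Finset.mem_biUnion, Finset.mem_Icc,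
      Finset.mem_filter] at h1 h2
    obtain ⟨s', ⟨hs1, _⟩, hs2, _⟩ := h2
    omega
  rw [hF, Finset.card_union_of_disjoint hdisj, Finset.card_product, Finset.card_singleton,
    one_mul]
  have hIcc : (Finset.Icc (1 : ℤ) ((p : ℤ) ^ n)).card = p ^ n := by
    rw [Int.card_Icc]
    have : ((p : ℤ) ^ n + 1 - 1) = ((p ^ n : ℕ) : ℤ) := by push_cast; ring
    rw [this, Int.toNat_natCast]
  rw [hIcc]
  have hbi : ((Finset.Icc 1 n).biUnion fun s =>
      ({s} : Finset ℕ) ×ˢ ((Finset.Icc (1 : ℤ) ((p : ℤ) ^ (n - s))).filter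
        (fun t => ¬ (p : ℤ) ∣ t))).card
      = ∑ s ∈ Finset.Icc 1 n, (p ^ (n - s) - p ^ (n - s) / p) := by
    rw [Finset.card_biUnion]
    · apply Finset.sum_congr rfl
      intro s _
      rw [Finset.card_product, Finset.card_singleton, one_mul, card_filter_not_dvd hpp]
    · intro x hx y hy hxy
      rw [Function.onFun, Finset.disjoint_left]
      rintro ⟨s, t⟩ h1 h2
      simp only [Finset.mem_product, Finset.mem_singleton] at h1 h2
      exact hxy (h1.1 ▸ h2.1 ▸ rfl)
  rw [hbi]
  have hsum : ∑ s ∈ Finset.Icc 1 n, (p ^ (n - s) - p ^ (n - s) / p)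
      = ∑ k ∈ Finset.range n, (p ^ k - p ^ k / p) := by
    apply Finset.sum_nbij' (fun s => n - s) (fun k => n - k)
    · intro a ha; simp only [Finset.mem_Icc] at ha; simp only [Finset.mem_range]; omega
    · intro a ha; simp only [Finset.mem_range] at ha; simp only [Finset.mem_Icc]; omega
    · intro a ha; simp only [Finset.mem_Icc] at ha; omega
    · intro a ha; simp only [Finset.mem_range] at ha; omega
    · intro a _; rfl
  rw [hsum, sum_pow_sub hpp n hn]



/-- The denominator `D_s(t) = α₁ p^{2s} + α₂ t²` appearing in the parametrization. -/
noncomputable def paramDenom (p : ℕ) [Fact p.Prime] (α₁ α₂ : ℤ) (s : ℕ) (t : ℤ) : ℤ_[p] :=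
  (α₁ : ℤ_[p]) * (p : ℤ_[p]) ^ (2 * s) + (α₂ : ℤ_[p]) * (t : ℤ_[p]) ^ 2

/-- `Y₁(s,t) = a - 2α₂(at² - btp^s)·D_s(t)⁻¹` in `ℤ_p`. -/
noncomputable def paramY₁ (p : ℕ) [Fact p.Prime] (α₁ α₂ : ℤ) (a b : ℤ_[p])
    (s : ℕ) (t : ℤ) : ℤ_[p] :=
  a - 2 * (α₂ : ℤ_[p]) * (a * (t : ℤ_[p]) ^ 2 - b * (t : ℤ_[p]) * (p : ℤ_[p]) ^ s) *
    Ring.inverse (paramDenom p α₁ α₂ s t)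

/-- `Y₂(s,t) = -b - 2α₁p^s(at - bp^s)·D_s(t)⁻¹` in `ℤ_p`. -/
noncomputable def paramY₂ (p : ℕ) [Fact p.Prime] (α₁ α₂ : ℤ) (a b : ℤ_[p])
    (s : ℕ) (t : ℤ) : ℤ_[p] :=
  -b - 2 * (α₁ : ℤ_[p]) * (p : ℤ_[p]) ^ s * (a * (t : ℤ_[p]) - b * (p : ℤ_[p]) ^ s) *
    Ring.inverse (paramDenom p α₁ α₂ s t)


theorem parametrization_case_II (p : ℕ) [hp : Fact p.Prime] (hodd : Odd p)
    (n : ℕ) (hn : 1 ≤ n) (α₁ α₂ α₃ : ℤ)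
    (h1 : ¬ (p : ℤ) ∣ α₁) (h2 : ¬ (p : ℤ) ∣ α₂) (h3 : ¬ (p : ℤ) ∣ α₃)
    (hq12 : legendreSym p (-(α₁ * α₂)) ≠ 1)
    (hq13 : legendreSym p (-(α₁ * α₃)) ≠ 1)
    (hq23 : legendreSym p (-(α₂ * α₃)) ≠ 1)
    (a b : ℤ_[p]) (hab : (α₁ : ℤ_[p]) * a ^ 2 + (α₂ : ℤ_[p]) * b ^ 2 = -(α₃ : ℤ_[p]))
    (T : Set (ℕ × ℤ))
    (hT : T = {st : ℕ × ℤ |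
        (st.1 = 0 ∧ 1 ≤ st.2 ∧ st.2 ≤ (p : ℤ) ^ n) ∨
        (1 ≤ st.1 ∧ st.1 ≤ n ∧ 1 ≤ st.2 ∧ st.2 ≤ (p : ℤ) ^ (n - st.1) ∧ ¬ (p : ℤ) ∣ st.2)}) :
    (∀ st ∈ T, IsUnit (paramDenom p α₁ α₂ st.1 st.2)) ∧
    Set.InjOn (fun st : ℕ × ℤ =>
        ((PadicInt.toZModPow n (paramY₁ p α₁ α₂ a b st.1 st.2),
          PadicInt.toZModPow n (paramY₂ p α₁ α₂ a b st.1 st.2)) :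
          ZMod (p ^ n) × ZMod (p ^ n))) T ∧
    (fun st : ℕ × ℤ =>
        ((PadicInt.toZModPow n (paramY₁ p α₁ α₂ a b st.1 st.2),
          PadicInt.toZModPow n (paramY₂ p α₁ α₂ a b st.1 st.2)) :
          ZMod (p ^ n) × ZMod (p ^ n))) '' T =
      {y : ZMod (p ^ n) × ZMod (p ^ n) |
        (α₁ : ZMod (p ^ n)) * y.1 ^ 2 + (α₂ : ZMod (p ^ n)) * y.2 ^ 2 +
          (α₃ : ZMod (p ^ n)) = 0} ∧
    Nat.card T = p ^ n + p ^ (n - 1) := by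
  have hn0 : n ≠ 0 := by omega
  haveI hne : NeZero (p ^ n) := ⟨pow_ne_zero n hp.1.ne_zero⟩
  let φ : ℤ_[p] →+* ZMod (p ^ n) := PadicInt.toZModPow n
  let ψ : ZMod (p ^ n) →+* ZMod p := ZMod.castHom (dvd_pow_self p hn0) (ZMod p)
  have hpodd : ¬ (p : ℤ) ∣ 2 := by
    intro hd
    have hle := Int.le_of_dvd (by norm_num) hd
    have h2le := hp.1.two_le
    have hp2 : p = 2 := by omega
    rcases hodd with ⟨k, hk⟩
    omega
  have ha1 : IsUnit ((α₁ : ZMod (p ^ n))) := zmodpn_int_unit hn α₁ h1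
  have ha2 : IsUnit ((α₂ : ZMod (p ^ n))) := zmodpn_int_unit hn α₂ h2
  have ha3 : IsUnit ((α₃ : ZMod (p ^ n))) := zmodpn_int_unit hn α₃ h3
  have h2u : IsUnit ((2 : ZMod (p ^ n))) := by
    have h22 : ((2 : ℤ) : ZMod (p ^ n)) = (2 : ZMod (p ^ n)) := by norm_cast
    rw [← h22]
    exact zmodpn_int_unit hn 2 hpodd
  have hq23' : legendreSym p (-(α₃ * α₂)) ≠ 1 := by rwa [mul_comm α₃ α₂]
  have hq13' : legendreSym p (-(α₃ * α₁)) ≠ 1 := by rwa [mul_comm α₃ α₁]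
  have hua : IsUnit a := by
    by_contra h
    have h0 : PadicInt.toZMod a = 0 := padic_toZMod_eq_zero h
    have habp := congrArg (PadicInt.toZMod (p := p)) hab
    simp only [map_add, map_mul, map_pow, map_intCast, map_neg] at habp
    rw [h0] at habp
    exact no_sol α₃ α₂ h3 h2 hq23' (PadicInt.toZMod b) (by linear_combination habp)
  have hub : IsUnit b := by
    by_contra h
    have h0 : PadicInt.toZMod b = 0 := padic_toZMod_eq_zero h
    have habp := congrArg (PadicInt.toZMod (p := p)) hab
    simp only [map_add, map_mul, map_pow, map_intCast, map_neg] at habp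
    rw [h0] at habp
    exact no_sol α₃ α₁ h3 h1 hq13' (PadicInt.toZMod a) (by linear_combination habp)
  have hA : IsUnit (φ a) := hua.map φ
  have hB : IsUnit (φ b) := hub.map φ
  have hz : (α₁ : ZMod (p ^ n)) * (φ a) ^ 2 + (α₂ : ZMod (p ^ n)) * (φ b) ^ 2
      + (α₃ : ZMod (p ^ n)) = 0 := by
    have hmap := congrArg φ hab
    simp only [map_add, map_mul, map_pow, map_intCast, map_neg] at hmap
    linear_combination hmap
  -- Part 1
  have part1 : ∀ st ∈ T, IsUnit (paramDenom p α₁ α₂ st.1 st.2) := by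
    intro st hst
    rw [hT] at hst
    have hcase : st.1 = 0 ∨ (1 ≤ st.1 ∧ ¬ (p : ℤ) ∣ st.2) := by
      rcases hst with ⟨h, _⟩ | ⟨h, _, _, _, h5⟩
      · exact Or.inl h
      · exact Or.inr ⟨h, h5⟩
    have hD := denom_not_dvd α₁ α₂ h1 h2 hq12 st.1 st.2 hcase
    have heq : paramDenom p α₁ α₂ st.1 st.2
        = ((α₁ * (p : ℤ) ^ (2 * st.1) + α₂ * st.2 ^ 2 : ℤ) : ℤ_[p]) := by
      simp only [paramDenom]
      push_cast
      ring
    rw [heq]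
    exact (padic_int_isUnit_iff _).mpr hD
  -- bundled facts
  have hkey : ∀ st : ℕ × ℤ, st ∈ T →
      relV (α₁ : ZMod (p ^ n)) (α₂ : ZMod (p ^ n)) (φ a) (φ b)
        ((α₁ : ZMod (p ^ n)) * (φ (paramY₁ p α₁ α₂ a b st.1 st.2)))
        (φ (paramY₂ p α₁ α₂ a b st.1 st.2))
        ((α₁ : ZMod (p ^ n)) * ((p : ZMod (p ^ n)) ^ st.1)) ((st.2 : ℤ) : ZMod (p ^ n)) ∧
      IsUnit (((α₁ : ZMod (p ^ n)) * ((p : ZMod (p ^ n)) ^ st.1)) ^ 2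
        + (α₁ : ZMod (p ^ n)) * (α₂ : ZMod (p ^ n)) * (((st.2 : ℤ) : ZMod (p ^ n))) ^ 2) := by
    intro st hst
    have hD := part1 st hst
    have hφD : φ (paramDenom p α₁ α₂ st.1 st.2)
        = (α₁ : ZMod (p ^ n)) * ((p : ZMod (p ^ n)) ^ st.1) ^ 2
          + (α₂ : ZMod (p ^ n)) * ((st.2 : ℤ) : ZMod (p ^ n)) ^ 2 := by
      simp only [paramDenom, map_add, map_mul, map_pow, map_intCast, map_natCast]
      rw [← pow_mul, mul_comm st.1 2]
    have hE : ((α₁ : ZMod (p ^ n)) * ((p : ZMod (p ^ n)) ^ st.1) ^ 2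
        + (α₂ : ZMod (p ^ n)) * ((st.2 : ℤ) : ZMod (p ^ n)) ^ 2)
        * (φ (Ring.inverse (paramDenom p α₁ α₂ st.1 st.2))) = 1 := by
      rw [← hφD, ← map_mul, Ring.mul_inverse_cancel _ hD, map_one]
    have hY1 : φ (paramY₁ p α₁ α₂ a b st.1 st.2)
        = φ a - 2 * (α₂ : ZMod (p ^ n)) * ((φ a) * ((st.2 : ℤ) : ZMod (p ^ n)) ^ 2
            - (φ b) * ((st.2 : ℤ) : ZMod (p ^ n)) * ((p : ZMod (p ^ n)) ^ st.1))
            * (φ (Ring.inverse (paramDenom p α₁ α₂ st.1 st.2))) := by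
      simp only [paramY₁, map_sub, map_mul, map_pow, map_intCast, map_natCast, map_ofNat]
    have hY2 : φ (paramY₂ p α₁ α₂ a b st.1 st.2)
        = -(φ b) - 2 * (α₁ : ZMod (p ^ n)) * ((p : ZMod (p ^ n)) ^ st.1)
            * ((φ a) * ((st.2 : ℤ) : ZMod (p ^ n)) - (φ b) * ((p : ZMod (p ^ n)) ^ st.1))
            * (φ (Ring.inverse (paramDenom p α₁ α₂ st.1 st.2))) := by
      simp only [paramY₂, map_sub, map_mul, map_pow, map_intCast, map_natCast, map_ofNat,
        map_neg]
    constructor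
    · rw [hY1, hY2]
      exact relV_param (α₁ : ZMod (p ^ n)) (α₂ : ZMod (p ^ n)) (φ a) (φ b)
        (φ (Ring.inverse (paramDenom p α₁ α₂ st.1 st.2)))
        ((p : ZMod (p ^ n)) ^ st.1) ((st.2 : ℤ) : ZMod (p ^ n)) hE
    · have hrw : ((α₁ : ZMod (p ^ n)) * ((p : ZMod (p ^ n)) ^ st.1)) ^ 2
          + (α₁ : ZMod (p ^ n)) * (α₂ : ZMod (p ^ n)) * (((st.2 : ℤ) : ZMod (p ^ n))) ^ 2
          = (α₁ : ZMod (p ^ n)) * ((α₁ : ZMod (p ^ n)) * ((p : ZMod (p ^ n)) ^ st.1) ^ 2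
            + (α₂ : ZMod (p ^ n)) * ((st.2 : ℤ) : ZMod (p ^ n)) ^ 2) := by
        ring
      rw [hrw]
      exact ha1.mul (IsUnit.of_mul_eq_one _ hE)
  -- Part 2
  have part2 : Set.InjOn (fun st : ℕ × ℤ =>
      ((PadicInt.toZModPow n (paramY₁ p α₁ α₂ a b st.1 st.2),
        PadicInt.toZModPow n (paramY₂ p α₁ α₂ a b st.1 st.2)) :
        ZMod (p ^ n) × ZMod (p ^ n))) T := by
    intro st hst st' hst' heq
    simp only [Prod.mk.injEq] at heq
    obtain ⟨he1, he2⟩ := heq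
    have k := hkey st hst
    have k' := hkey st' hst'
    have hrel' := k'.1
    rw [show PadicInt.toZModPow (p := p) n (paramY₁ p α₁ α₂ a b st'.1 st'.2)
        = PadicInt.toZModPow (p := p) n (paramY₁ p α₁ α₂ a b st.1 st.2) from he1.symm,
      show PadicInt.toZModPow (p := p) n (paramY₂ p α₁ α₂ a b st'.1 st'.2)
        = PadicInt.toZModPow (p := p) n (paramY₂ p α₁ α₂ a b st.1 st.2) from he2.symm] at hrel'
    have hinj := relV_inj (α₁ : ZMod (p ^ n)) (α₂ : ZMod (p ^ n)) (α₃ : ZMod (p ^ n))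
      (φ a) (φ b) hz ha1 ha3 h2u k.1 hrel' k.2
    have hc : (α₁ : ZMod (p ^ n)) * ((p : ZMod (p ^ n)) ^ st.1 * ((st'.2 : ℤ) : ZMod (p ^ n)))
        = (α₁ : ZMod (p ^ n)) * (((st.2 : ℤ) : ZMod (p ^ n)) * ((p : ZMod (p ^ n)) ^ st'.1)) := by
      linear_combination hinj
    have hcc := ha1.mul_left_cancel hc
    have hcast : (((p : ℤ) ^ st.1 * st'.2 - (p : ℤ) ^ st'.1 * st.2 : ℤ) : ZMod (p ^ n)) = 0 := by
      push_cast
      linear_combination hcc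
    rw [ZMod.intCast_zmod_eq_zero_iff_dvd] at hcast
    have hdvd : (p : ℤ) ^ n ∣ (p : ℤ) ^ st.1 * st'.2 - (p : ℤ) ^ st'.1 * st.2 := by
      have hcc2 : ((p ^ n : ℕ) : ℤ) = (p : ℤ) ^ n := by push_cast; ring
      rwa [hcc2] at hcast
    have hstT := hst; have hstT' := hst'
    rw [hT] at hstT hstT'
    have := T_inj_arith hp.1 hn hstT hstT' hdvd
    exact Prod.ext this.1 this.2
  -- Part 3
  have part3 : (fun st : ℕ × ℤ =>
      ((PadicInt.toZModPow n (paramY₁ p α₁ α₂ a b st.1 st.2),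
        PadicInt.toZModPow n (paramY₂ p α₁ α₂ a b st.1 st.2)) :
        ZMod (p ^ n) × ZMod (p ^ n))) '' T =
      {y : ZMod (p ^ n) × ZMod (p ^ n) |
        (α₁ : ZMod (p ^ n)) * y.1 ^ 2 + (α₂ : ZMod (p ^ n)) * y.2 ^ 2 +
          (α₃ : ZMod (p ^ n)) = 0} := by
    apply Set.Subset.antisymm
    · rintro y ⟨st, hst, rfl⟩
      have k := hkey st hst
      exact relV_sols (α₁ : ZMod (p ^ n)) (α₂ : ZMod (p ^ n)) (α₃ : ZMod (p ^ n))
        (φ a) (φ b) hz ha1 k.1 k.2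
    · rintro ⟨y₁, y₂⟩ hy
      simp only [Set.mem_setOf_eq] at hy
      obtain ⟨c₁, c₂, hrel, hor⟩ :
          ∃ c₁ c₂ : ZMod (p ^ n),
            relV (α₁ : ZMod (p ^ n)) (α₂ : ZMod (p ^ n)) (φ a) (φ b)
              ((α₁ : ZMod (p ^ n)) * y₁) y₂ c₁ c₂ ∧ (IsUnit c₁ ∨ IsUnit c₂) := by
        by_cases hcp : IsUnit (-((α₁ : ZMod (p ^ n)) * (α₃ : ZMod (p ^ n))) +
            (((α₁ : ZMod (p ^ n)) * (φ a)) * ((α₁ : ZMod (p ^ n)) * y₁)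
              + (α₁ : ZMod (p ^ n)) * (α₂ : ZMod (p ^ n)) * (φ b) * y₂))
        · exact ⟨_, _, relV_start_plus (α₁ : ZMod (p ^ n)) (α₂ : ZMod (p ^ n))
            (α₃ : ZMod (p ^ n)) (φ a) (φ b) hz hy, Or.inl hcp⟩
        · by_cases hcm : IsUnit ((((α₁ : ZMod (p ^ n)) * (φ a)) * ((α₁ : ZMod (p ^ n)) * y₁)
              + (α₁ : ZMod (p ^ n)) * (α₂ : ZMod (p ^ n)) * (φ b) * y₂)
              - -((α₁ : ZMod (p ^ n)) * (α₃ : ZMod (p ^ n))))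
          · exact ⟨_, _, relV_start_minus (α₁ : ZMod (p ^ n)) (α₂ : ZMod (p ^ n))
              (α₃ : ZMod (p ^ n)) (φ a) (φ b) hz hy, Or.inr hcm⟩
          · exfalso
            have hzp : ψ (-((α₁ : ZMod (p ^ n)) * (α₃ : ZMod (p ^ n))) +
                (((α₁ : ZMod (p ^ n)) * (φ a)) * ((α₁ : ZMod (p ^ n)) * y₁)
                  + (α₁ : ZMod (p ^ n)) * (α₂ : ZMod (p ^ n)) * (φ b) * y₂)) = 0 := by
              by_contra hne'
              exact hcp ((zmodpn_unit_iff hn _).mpr hne')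
            have hzm : ψ ((((α₁ : ZMod (p ^ n)) * (φ a)) * ((α₁ : ZMod (p ^ n)) * y₁)
                + (α₁ : ZMod (p ^ n)) * (α₂ : ZMod (p ^ n)) * (φ b) * y₂)
                - -((α₁ : ZMod (p ^ n)) * (α₃ : ZMod (p ^ n)))) = 0 := by
              by_contra hne'
              exact hcm ((zmodpn_unit_iff hn _).mpr hne')
            have hdiff : ψ (-(2 * ((α₁ : ZMod (p ^ n)) * (α₃ : ZMod (p ^ n))))) = 0 := by
              have hsplit : (-(2 * ((α₁ : ZMod (p ^ n)) * (α₃ : ZMod (p ^ n))))) =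
                  (-((α₁ : ZMod (p ^ n)) * (α₃ : ZMod (p ^ n))) +
                    (((α₁ : ZMod (p ^ n)) * (φ a)) * ((α₁ : ZMod (p ^ n)) * y₁)
                      + (α₁ : ZMod (p ^ n)) * (α₂ : ZMod (p ^ n)) * (φ b) * y₂)) -
                  ((((α₁ : ZMod (p ^ n)) * (φ a)) * ((α₁ : ZMod (p ^ n)) * y₁)
                    + (α₁ : ZMod (p ^ n)) * (α₂ : ZMod (p ^ n)) * (φ b) * y₂)
                    - -((α₁ : ZMod (p ^ n)) * (α₃ : ZMod (p ^ n)))) := by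
                ring
              rw [hsplit, map_sub, hzp, hzm, sub_zero]
            have hun : IsUnit (-(2 * ((α₁ : ZMod (p ^ n)) * (α₃ : ZMod (p ^ n))))) :=
              (h2u.mul (ha1.mul ha3)).neg
            rw [zmodpn_unit_iff hn] at hun
            exact hun hdiff
      by_cases hc1 : IsUnit c₁
      · -- case s = 0
        obtain ⟨u, hu⟩ := isUnit_iff_exists_inv.mp hc1
        have hv1 : (α₁ : ZMod (p ^ n)) * u * c₁
            = (α₁ : ZMod (p ^ n)) * ((p : ZMod (p ^ n)) ^ (0 : ℕ)) := by
          rw [pow_zero, mul_one, mul_assoc, mul_comm u c₁, hu, mul_one]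
        have hscale := relV_scale (α₁ : ZMod (p ^ n)) (α₂ : ZMod (p ^ n)) (φ a) (φ b)
          ((α₁ : ZMod (p ^ n)) * u) hrel
        rw [hv1] at hscale
        obtain ⟨t, ht1, htle, htdvd, -⟩ :=
          int_rep (p := p) n (((((α₁ : ZMod (p ^ n)) * u * c₂).val : ℕ)) : ℤ)
        have hmem : ((0 : ℕ), t) ∈ T := by
          rw [hT]
          exact Or.inl ⟨rfl, ht1, htle⟩
        have htR : ((t : ℤ) : ZMod (p ^ n)) = (α₁ : ZMod (p ^ n)) * u * c₂ := by
          have h0 : ((t - ((((α₁ : ZMod (p ^ n)) * u * c₂).val : ℕ) : ℤ) : ℤ)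
              : ZMod (p ^ n)) = 0 := by
            rw [ZMod.intCast_zmod_eq_zero_iff_dvd]
            have hcc2 : ((p ^ n : ℕ) : ℤ) = (p : ℤ) ^ n := by push_cast; ring
            rw [hcc2]
            exact htdvd
          have h0' := sub_eq_zero.mp (by push_cast at h0 ⊢; exact h0)
          rw [h0']
          exact ZMod.natCast_zmod_val _
        rw [← htR] at hscale
        have k := hkey ((0 : ℕ), t) hmem
        have hres := relV_extract (α₁ : ZMod (p ^ n)) (α₂ : ZMod (p ^ n)) (φ a) (φ b)
          ha1 hscale k.1 k.2
        exact ⟨((0 : ℕ), t), hmem, Prod.ext hres.1.symm hres.2.symm⟩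
      · -- case s ≥ 1
        have hc2 : IsUnit c₂ := hor.resolve_left hc1
        obtain ⟨s, u, hsn, huu, hdec, hs1⟩ := zmodpn_decomp hn c₁
        have hs : 1 ≤ s := hs1 hc1
        obtain ⟨ui, hui⟩ := isUnit_iff_exists_inv.mp huu
        have huiu : IsUnit ui := IsUnit.of_mul_eq_one u (by rwa [mul_comm] at hui)
        have hv1 : (α₁ : ZMod (p ^ n)) * ui * c₁
            = (α₁ : ZMod (p ^ n)) * ((p : ZMod (p ^ n)) ^ s) := by
          rw [hdec]
          linear_combination ((α₁ : ZMod (p ^ n)) * (p : ZMod (p ^ n)) ^ s) * hui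
        have hscale := relV_scale (α₁ : ZMod (p ^ n)) (α₂ : ZMod (p ^ n)) (φ a) (φ b)
          ((α₁ : ZMod (p ^ n)) * ui) hrel
        rw [hv1] at hscale
        have hustar : IsUnit ((α₁ : ZMod (p ^ n)) * ui * c₂) := (ha1.mul huiu).mul hc2
        have hndval : ¬ (p : ℤ) ∣ ((((α₁ : ZMod (p ^ n)) * ui * c₂).val : ℕ) : ℤ) := by
          intro hd
          exact zmodpn_unit_not_dvd_val hn hustar (Int.ofNat_dvd.mp (by exact_mod_cast hd))
        obtain ⟨t, ht1, htle, htdvd, htnd⟩ :=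
          int_rep (p := p) (n - s) (((((α₁ : ZMod (p ^ n)) * ui * c₂).val : ℕ)) : ℤ)
        have hmem : (s, t) ∈ T := by
          rw [hT]
          exact Or.inr ⟨hs, hsn, ht1, htle, htnd hndval⟩
        -- congruence step
        have hg : ((α₁ : ZMod (p ^ n)) * ((p : ZMod (p ^ n)) ^ s))
            * ((α₁ : ZMod (p ^ n)) * ui * c₂ - ((t : ℤ) : ZMod (p ^ n))) = 0 := by
          obtain ⟨k, hk⟩ := htdvd
          have hcastk : ((t : ℤ) : ZMod (p ^ n)) - (α₁ : ZMod (p ^ n)) * ui * c₂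
              = (p : ZMod (p ^ n)) ^ (n - s) * ((k : ℤ) : ZMod (p ^ n)) := by
            have h' : ((t - ((((α₁ : ZMod (p ^ n)) * ui * c₂).val : ℕ) : ℤ) : ℤ) : ZMod (p ^ n))
                = (((p : ℤ) ^ (n - s) * k : ℤ) : ZMod (p ^ n)) := by
              exact_mod_cast congrArg (fun z : ℤ => ((z : ℤ) : ZMod (p ^ n))) hk
            push_cast at h'
            rw [ZMod.natCast_zmod_val ((α₁ : ZMod (p ^ n)) * ui * c₂)] at h'
            exact h'
          have hps : (p : ZMod (p ^ n)) ^ s * (p : ZMod (p ^ n)) ^ (n - s) = 0 := by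
            rw [← pow_add, show s + (n - s) = n by omega]
            exact zmodpn_pow_n_eq_zero
          linear_combination (-(α₁ : ZMod (p ^ n)) * (p : ZMod (p ^ n)) ^ s) * hcastk
            + (-(α₁ : ZMod (p ^ n)) * ((k : ℤ) : ZMod (p ^ n))) * hps
        have hNstar : IsUnit (((α₁ : ZMod (p ^ n)) * ((p : ZMod (p ^ n)) ^ s)) ^ 2
            + (α₁ : ZMod (p ^ n)) * (α₂ : ZMod (p ^ n))
              * ((α₁ : ZMod (p ^ n)) * ui * c₂) ^ 2) := by
          rw [zmodpn_unit_iff hn]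
          have hψp : ψ ((p : ZMod (p ^ n))) = 0 := by
            rw [map_natCast]
            exact ZMod.natCast_self p
          have hexp : ψ (((α₁ : ZMod (p ^ n)) * ((p : ZMod (p ^ n)) ^ s)) ^ 2
              + (α₁ : ZMod (p ^ n)) * (α₂ : ZMod (p ^ n))
                * ((α₁ : ZMod (p ^ n)) * ui * c₂) ^ 2)
              = ψ ((α₁ : ZMod (p ^ n))) * ψ ((α₂ : ZMod (p ^ n)))
                * (ψ ((α₁ : ZMod (p ^ n)) * ui * c₂)) ^ 2 := by
            rw [map_add, map_pow, map_mul, map_pow, hψp,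
              zero_pow (by omega : s ≠ 0), map_mul, map_mul, map_pow]
            ring
          rw [hexp]
          have hn1 : ψ ((α₁ : ZMod (p ^ n))) ≠ 0 := by
            have := ha1; rwa [zmodpn_unit_iff hn] at this
          have hn2 : ψ ((α₂ : ZMod (p ^ n))) ≠ 0 := by
            have := ha2; rwa [zmodpn_unit_iff hn] at this
          have hn3 : ψ ((α₁ : ZMod (p ^ n)) * ui * c₂) ≠ 0 := by
            have := hustar; rwa [zmodpn_unit_iff hn] at this
          exact mul_ne_zero (mul_ne_zero hn1 hn2) (pow_ne_zero _ hn3)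
        have hcongr := relV_congr (α₁ : ZMod (p ^ n)) (α₂ : ZMod (p ^ n)) (φ a) (φ b)
          hscale hg hNstar
        have k := hkey (s, t) hmem
        have hres := relV_extract (α₁ : ZMod (p ^ n)) (α₂ : ZMod (p ^ n)) (φ a) (φ b)
          ha1 hcongr k.1 k.2
        exact ⟨(s, t), hmem, Prod.ext hres.1.symm hres.2.symm⟩
  exact ⟨part1, part2, part3, count_T hp.1 n hn T hT⟩
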